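/- The class B_n^σ(β) is closed under the Bernardi integral transform F(z) = ((c+1)/z^c) ∫_0^z t^{c-1} f(t) dt when c + 1 = σ − n > 0: if f ∈ B_n^σ(β), then F ∈ B_n^σ(β). -/

import Mathlib

open Complex MeasureTheory

/-- The Carathéodory class `P`: analytic on the unit disk, value `1` at `0`,
positive real part. -/
def IsCara (p : ℂ → ℂ) : Prop :=
  DifferentiableOn ℂ p (Metric.ball 0 1) ∧ p 0 = 1 ∧
    ∀ z ∈ Metric.ball (0 : ℂ) 1, 0 < (p z).re

/-- The σ-nth integral iterate (averaged form after substituting `t = s z`):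
`p_{σ,n}(z) = (σ-(n-1)) ∫_0^1 s^(σ-n) p_{σ,n-1}(s z) ds`. -/
noncomputable def sigmaIter (σ : ℝ) : ℕ → (ℂ → ℂ) → (ℂ → ℂ)
  | 0, p => p
  | (n + 1), p => fun z =>
      ((σ - (n : ℝ)) : ℂ) *
        ∫ s in (0 : ℝ)..1, ((s ^ (σ - ((n : ℝ) + 1)) : ℝ) : ℂ) * sigmaIter σ n p ((s : ℂ) * z)

/-- The coefficient multiplier `[σ]_{n/k} = (σ-(n-1))_n / (σ+k-(n-1))_n`
(Pochhammer / rising factorial). -/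
noncomputable def poch (σ : ℝ) (n k : ℕ) : ℝ :=
  (ascPochhammer ℝ n).eval (σ - ((n : ℝ) - 1)) /
    (ascPochhammer ℝ n).eval (σ + (k : ℝ) - ((n : ℝ) - 1))

/-- Membership in `P_n^σ`. -/
def MemPn (σ : ℝ) (n : ℕ) (q : ℂ → ℂ) : Prop :=
  ∃ p : ℂ → ℂ, IsCara p ∧ ∀ z ∈ Metric.ball (0 : ℂ) 1, q z = sigmaIter σ n p z

/-- Membership in `B_n^σ(β)`: `f(z) = z (β + (1-β) p_{σ,n}(z))` for some Carathéodory `p`. -/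
def MemB (σ : ℝ) (n : ℕ) (β : ℝ) (f : ℂ → ℂ) : Prop :=
  ∃ p : ℂ → ℂ, IsCara p ∧ ∀ z ∈ Metric.ball (0 : ℂ) 1,
    f z = z * ((β : ℂ) + ((1 : ℂ) - β) * sigmaIter σ n p z)


section Helpers
open Set

lemma mem_ball_smul' {z : ℂ} (hz : z ∈ Metric.ball (0:ℂ) 1) {s : ℝ} (h0 : 0 ≤ s) (h1 : s ≤ 1) :
    (s:ℂ) * z ∈ Metric.ball (0:ℂ) 1 := by
  simp only [Metric.mem_ball, dist_zero_right] at *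
  calc ‖(s:ℂ) * z‖ = |s| * ‖z‖ := by rw [norm_mul, Complex.norm_real, Real.norm_eq_abs]
    _ ≤ 1 * ‖z‖ := mul_le_mul_of_nonneg_right
        (by rw [_root_.abs_of_nonneg h0]; exact h1) (norm_nonneg z)
    _ < 1 := by simpa using hz

lemma contOn_integrand {a : ℝ} {g : ℂ → ℂ} (hg : ContinuousOn g (Metric.ball 0 1))
    {z : ℂ} (hz : z ∈ Metric.ball (0:ℂ) 1) :
    ContinuousOn (fun s : ℝ => ((s ^ a : ℝ) : ℂ) * g ((s:ℂ) * z)) (Ioc 0 1) := by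
  apply ContinuousOn.mul
  · apply Continuous.comp_continuousOn continuous_ofReal
    intro s hs
    exact (Real.continuousAt_rpow_const s a (Or.inl hs.1.ne')).continuousWithinAt
  · apply ContinuousOn.comp hg
    · exact (continuous_ofReal.mul continuous_const).continuousOn
    · intro s hs
      exact mem_ball_smul' hz hs.1.le hs.2

lemma smul_mem_closedBall' {z : ℂ} {r : ℝ} (hz : ‖z‖ ≤ r) {s : ℝ} (h0 : 0 ≤ s) (h1 : s ≤ 1) :
    (s:ℂ) * z ∈ Metric.closedBall (0:ℂ) r := by
  simp only [Metric.mem_closedBall, dist_zero_right]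
  calc ‖(s:ℂ) * z‖ = |s| * ‖z‖ := by rw [norm_mul, Complex.norm_real, Real.norm_eq_abs]
    _ ≤ 1 * ‖z‖ := mul_le_mul_of_nonneg_right
        (by rw [_root_.abs_of_nonneg h0]; exact h1) (norm_nonneg z)
    _ ≤ r := by simpa using hz

lemma exists_bound' {g : ℂ → ℂ} (hg : ContinuousOn g (Metric.ball 0 1)) {r : ℝ} (hr : r < 1) :
    ∃ M : ℝ, 0 ≤ M ∧ ∀ w ∈ Metric.closedBall (0:ℂ) r, ‖g w‖ ≤ M := by
  have hsub : Metric.closedBall (0:ℂ) r ⊆ Metric.ball 0 1 := by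
    intro w hw
    simp only [Metric.mem_closedBall, dist_zero_right] at hw
    simp only [Metric.mem_ball, dist_zero_right]
    linarith
  obtain ⟨C, hC⟩ := (isCompact_closedBall (0:ℂ) r).exists_bound_of_continuousOn (hg.mono hsub)
  exact ⟨max C 0, le_max_right _ _, fun w hw => (hC w hw).trans (le_max_left _ _)⟩

lemma integrableOn_rpow_mul {a : ℝ} (ha : -1 < a) (M : ℝ) :
    IntegrableOn (fun s : ℝ => M * s ^ a) (Ioc 0 1) := by
  have := (intervalIntegral.intervalIntegrable_rpow' (a := 0) (b := 1) ha).const_mul M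
  rwa [intervalIntegrable_iff_integrableOn_Ioc_of_le zero_le_one] at this

lemma integrableOn_integrand {a : ℝ} (ha : -1 < a) {g : ℂ → ℂ}
    (hg : ContinuousOn g (Metric.ball 0 1)) {z : ℂ} (hz : z ∈ Metric.ball (0:ℂ) 1)
    {M : ℝ} (hM : ∀ w ∈ Metric.closedBall (0:ℂ) ‖z‖, ‖g w‖ ≤ M) :
    IntegrableOn (fun s : ℝ => ((s ^ a : ℝ) : ℂ) * g ((s:ℂ) * z)) (Ioc 0 1) := by
  apply Integrable.mono (integrableOn_rpow_mul ha M)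
  · exact (contOn_integrand hg hz).aestronglyMeasurable measurableSet_Ioc
  · rw [ae_restrict_iff' measurableSet_Ioc]
    filter_upwards with s hs
    have hsa : (0:ℝ) ≤ s ^ a := Real.rpow_nonneg hs.1.le a
    have hgb : ‖g ((s:ℂ) * z)‖ ≤ M := hM _ (smul_mem_closedBall' le_rfl hs.1.le hs.2)
    have hM0 : 0 ≤ M := le_trans (norm_nonneg _) hgb
    calc ‖((s ^ a : ℝ) : ℂ) * g ((s:ℂ) * z)‖ = s ^ a * ‖g ((s:ℂ) * z)‖ := by
          rw [norm_mul, Complex.norm_real, Real.norm_eq_abs, _root_.abs_of_nonneg hsa]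
      _ ≤ s ^ a * M := mul_le_mul_of_nonneg_left hgb hsa
      _ ≤ ‖M * s ^ a‖ := by rw [Real.norm_eq_abs, _root_.abs_of_nonneg (mul_nonneg hM0 hsa)]; ring_nf; exact le_rfl

noncomputable def TT (a : ℝ) (g : ℂ → ℂ) (z : ℂ) : ℂ :=
  ∫ s in (0:ℝ)..1, ((s ^ a : ℝ) : ℂ) * g ((s:ℂ) * z)

lemma TT_eq_setIntegral (a : ℝ) (g : ℂ → ℂ) (z : ℂ) :
    TT a g z = ∫ s in Ioc (0:ℝ) 1, ((s ^ a : ℝ) : ℂ) * g ((s:ℂ) * z) := by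
  rw [TT, intervalIntegral.integral_of_le zero_le_one]

lemma continuousOn_TT {a : ℝ} (ha : -1 < a) {g : ℂ → ℂ}
    (hg : ContinuousOn g (Metric.ball 0 1)) :
    ContinuousOn (TT a g) (Metric.ball 0 1) := by
  intro z₀ hz₀
  apply ContinuousAt.continuousWithinAt
  have hz₀n : ‖z₀‖ < 1 := by simpa [Metric.mem_ball] using hz₀
  set r : ℝ := (‖z₀‖ + 1) / 2 with hr
  have hr1 : r < 1 := by rw [hr]; linarith
  have hrn : ‖z₀‖ < r := by rw [hr]; linarith
  obtain ⟨M, hM0, hM⟩ := exists_bound' hg hr1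
  have hU : ∀ᶠ z in nhds z₀, ‖z‖ ≤ r ∧ z ∈ Metric.ball (0:ℂ) 1 := by
    have : ∀ᶠ z in nhds z₀, ‖z‖ < r := by
      have : ContinuousAt (fun z : ℂ => ‖z‖) z₀ := continuous_norm.continuousAt
      exact this.eventually_lt continuousAt_const hrn
    filter_upwards [this] with z hz
    exact ⟨hz.le, by simp only [Metric.mem_ball, dist_zero_right]; linarith⟩
  have key : ContinuousAt (fun z => ∫ s in Ioc (0:ℝ) 1, ((s ^ a : ℝ) : ℂ) * g ((s:ℂ) * z)) z₀ := by
    apply continuousAt_of_dominated (bound := fun s => M * s ^ a)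
    · filter_upwards [hU] with z hz
      exact (contOn_integrand hg hz.2).aestronglyMeasurable measurableSet_Ioc
    · filter_upwards [hU] with z hz
      rw [ae_restrict_iff' measurableSet_Ioc]
      filter_upwards with s hs
      have hsa : (0:ℝ) ≤ s ^ a := Real.rpow_nonneg hs.1.le a
      have hgb : ‖g ((s:ℂ) * z)‖ ≤ M := hM _ (smul_mem_closedBall' hz.1 hs.1.le hs.2)
      calc ‖((s ^ a : ℝ) : ℂ) * g ((s:ℂ) * z)‖ = s ^ a * ‖g ((s:ℂ) * z)‖ := by
            rw [norm_mul, Complex.norm_real, Real.norm_eq_abs, _root_.abs_of_nonneg hsa]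
        _ ≤ s ^ a * M := mul_le_mul_of_nonneg_left hgb hsa
        _ = M * s ^ a := mul_comm _ _
    · exact integrableOn_rpow_mul ha M
    · rw [ae_restrict_iff' measurableSet_Ioc]
      filter_upwards with s hs
      have hmem : (s:ℂ) * z₀ ∈ Metric.ball (0:ℂ) 1 := mem_ball_smul' hz₀ hs.1.le hs.2
      have hgat : ContinuousAt g ((s:ℂ) * z₀) := hg.continuousAt (Metric.isOpen_ball.mem_nhds hmem)
      exact continuousAt_const.mul (hgat.comp ((continuous_const.mul continuous_id).continuousAt))
  have : ContinuousAt (TT a g) z₀ ↔ _ := continuousAt_congr (f := TT a g)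
    (g := fun z => ∫ s in Ioc (0:ℝ) 1, ((s ^ a : ℝ) : ℂ) * g ((s:ℂ) * z))
    (Filter.Eventually.of_forall (fun z => TT_eq_setIntegral a g z))
  exact this.mpr key

lemma differentiableOn_TT {a : ℝ} (ha : -1 < a) {g : ℂ → ℂ}
    (hg : DifferentiableOn ℂ g (Metric.ball 0 1)) :
    DifferentiableOn ℂ (TT a g) (Metric.ball 0 1) := by
  have hgc : ContinuousOn g (Metric.ball 0 1) := hg.continuousOn
  have hganal : AnalyticOnNhd ℂ g (Metric.ball 0 1) :=
    hg.analyticOnNhd Metric.isOpen_ball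
  have hg' : ContinuousOn (deriv g) (Metric.ball 0 1) := hganal.deriv.continuousOn
  intro z₀ hz₀
  have hz₀n : ‖z₀‖ < 1 := by simpa [Metric.mem_ball] using hz₀
  set r : ℝ := (‖z₀‖ + 1) / 2 with hrdef
  have hr1 : r < 1 := by rw [hrdef]; linarith
  have hrn : ‖z₀‖ < r := by rw [hrdef]; linarith
  set ε : ℝ := (1 - ‖z₀‖) / 2 with hεdef
  have hε : 0 < ε := by rw [hεdef]; linarith
  have hball : ∀ x ∈ Metric.ball z₀ ε, ‖x‖ ≤ r ∧ x ∈ Metric.ball (0:ℂ) 1 := by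
    intro x hx
    have : ‖x - z₀‖ < ε := by simpa [Metric.mem_ball, dist_eq_norm] using hx
    have hxn : ‖x‖ ≤ r := by
      calc ‖x‖ = ‖z₀ + (x - z₀)‖ := by ring_nf
        _ ≤ ‖z₀‖ + ‖x - z₀‖ := norm_add_le _ _
        _ ≤ r := by rw [hrdef, hεdef] at *; linarith
    exact ⟨hxn, by simp only [Metric.mem_ball, dist_zero_right]; linarith⟩
  obtain ⟨M, hM0, hM⟩ := exists_bound' hg' hr1
  obtain ⟨M₀, hM₀0, hM₀⟩ := exists_bound' hgc hz₀n
  have key := hasDerivAt_integral_of_dominated_loc_of_deriv_le (𝕜 := ℂ)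
    (μ := volume.restrict (Ioc (0:ℝ) 1))
    (F := fun z s => ((s ^ a : ℝ) : ℂ) * g ((s:ℂ) * z))
    (F' := fun z s => ((s ^ a : ℝ) : ℂ) * (deriv g ((s:ℂ) * z) * (s:ℂ)))
    (x₀ := z₀) (bound := fun s => M * s ^ a) (Metric.ball_mem_nhds z₀ hε)
    ?hmeas ?hint ?h'meas ?hbound (integrableOn_rpow_mul ha M) ?hdiff
  case hmeas =>
    have : ∀ᶠ z in nhds z₀, z ∈ Metric.ball (0:ℂ) 1 :=
      Metric.isOpen_ball.mem_nhds hz₀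
    filter_upwards [this] with z hz
    exact (contOn_integrand hgc hz).aestronglyMeasurable measurableSet_Ioc
  case hint => exact integrableOn_integrand ha hgc hz₀ hM₀
  case h'meas =>
    apply ContinuousOn.aestronglyMeasurable _ measurableSet_Ioc
    apply ContinuousOn.mul
    · apply Continuous.comp_continuousOn continuous_ofReal
      intro s hs
      exact (Real.continuousAt_rpow_const s a (Or.inl hs.1.ne')).continuousWithinAt
    · apply ContinuousOn.mul _ (continuous_ofReal.continuousOn)
      apply ContinuousOn.comp hg'
      · exact (continuous_ofReal.mul continuous_const).continuousOn
      · intro s hs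
        exact mem_ball_smul' hz₀ hs.1.le hs.2
  case hbound =>
    rw [ae_restrict_iff' measurableSet_Ioc]
    filter_upwards with s hs x hx
    have hsa : (0:ℝ) ≤ s ^ a := Real.rpow_nonneg hs.1.le a
    have hxr := hball x hx
    have hmem : (s:ℂ) * x ∈ Metric.closedBall (0:ℂ) r := smul_mem_closedBall' hxr.1 hs.1.le hs.2
    have hgb : ‖deriv g ((s:ℂ) * x)‖ ≤ M := hM _ hmem
    calc ‖((s ^ a : ℝ) : ℂ) * (deriv g ((s:ℂ) * x) * (s:ℂ))‖
        = s ^ a * (‖deriv g ((s:ℂ) * x)‖ * s) := by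
          rw [norm_mul, norm_mul, Complex.norm_real, Real.norm_eq_abs, _root_.abs_of_nonneg hsa,
            Complex.norm_real, Real.norm_eq_abs, _root_.abs_of_nonneg hs.1.le]
      _ ≤ s ^ a * (M * 1) := by
          apply mul_le_mul_of_nonneg_left _ hsa
          exact mul_le_mul hgb hs.2 hs.1.le hM0
      _ = M * s ^ a := by ring
  case hdiff =>
    rw [ae_restrict_iff' measurableSet_Ioc]
    filter_upwards with s hs x hx
    have hxr := hball x hx
    have hmem : (s:ℂ) * x ∈ Metric.ball (0:ℂ) 1 := mem_ball_smul' hxr.2 hs.1.le hs.2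
    have hd : HasDerivAt g (deriv g ((s:ℂ) * x)) ((s:ℂ) * x) :=
      (hg.differentiableAt (Metric.isOpen_ball.mem_nhds hmem)).hasDerivAt
    have hlin : HasDerivAt (fun y : ℂ => (s:ℂ) * y) (s:ℂ) x := by
      simpa using (hasDerivAt_id x).const_mul (s:ℂ)
    have hcomp : HasDerivAt (fun y : ℂ => g ((s:ℂ) * y)) (deriv g ((s:ℂ) * x) * (s:ℂ)) x :=
      HasDerivAt.comp x hd hlin
    exact hcomp.const_mul _
  have hDeriv : HasDerivAt (fun z => ∫ s in Ioc (0:ℝ) 1, ((s ^ a : ℝ) : ℂ) * g ((s:ℂ) * z))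
      (∫ s in Ioc (0:ℝ) 1, ((s ^ a : ℝ) : ℂ) * (deriv g ((s:ℂ) * z₀) * (s:ℂ))) z₀ := key.2
  have hTT : HasDerivAt (TT a g) _ z₀ := hDeriv.congr_of_eventuallyEq
    (Filter.Eventually.of_forall (fun z => (TT_eq_setIntegral a g z)))
  exact hTT.differentiableAt.differentiableWithinAt

lemma TT_zero {a : ℝ} (ha : -1 < a) (g : ℂ → ℂ) :
    TT a g 0 = (((a + 1)⁻¹ : ℝ) : ℂ) * g 0 := by
  have h1 : ∀ s : ℝ, ((s ^ a : ℝ) : ℂ) * g ((s:ℂ) * 0) = ((s ^ a : ℝ) : ℂ) * g 0 := by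
    intro s; rw [mul_zero]
  rw [TT]
  simp_rw [h1]
  rw [intervalIntegral.integral_mul_const, intervalIntegral.integral_ofReal,
    integral_rpow (Or.inl ha), Real.one_rpow, Real.zero_rpow (by linarith : a + 1 ≠ 0)]
  norm_num

lemma TT_re_pos {a : ℝ} (ha : -1 < a) {g : ℂ → ℂ}
    (hg : ContinuousOn g (Metric.ball 0 1))
    (hpos : ∀ z ∈ Metric.ball (0:ℂ) 1, 0 < (g z).re)
    {z : ℂ} (hz : z ∈ Metric.ball (0:ℂ) 1) : 0 < (TT a g z).re := by
  obtain ⟨M, hM0, hM⟩ := exists_bound' hg (show ‖z‖ < 1 by simpa [Metric.mem_ball] using hz)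
  have hint := integrableOn_integrand ha hg hz hM
  rw [TT_eq_setIntegral]
  have hre := integral_re hint
  simp only [RCLike.re_to_complex] at hre
  rw [← hre]
  have heq : ∀ s ∈ Ioc (0:ℝ) 1,
      (((s ^ a : ℝ) : ℂ) * g ((s:ℂ) * z)).re = s ^ a * (g ((s:ℂ) * z)).re := by
    intro s _
    simp
  rw [setIntegral_congr_fun measurableSet_Ioc heq]
  rw [← intervalIntegral.integral_of_le zero_le_one]
  apply intervalIntegral.intervalIntegral_pos_of_pos_on
  · rw [intervalIntegrable_iff_integrableOn_Ioc_of_le zero_le_one]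
    have : IntegrableOn (fun s : ℝ => (((s ^ a : ℝ) : ℂ) * g ((s:ℂ) * z)).re) (Ioc 0 1) :=
      hint.re
    exact this.congr_fun heq measurableSet_Ioc
  · intro s hs
    have h1 : 0 < s ^ a := Real.rpow_pos_of_pos hs.1 a
    have h2 : 0 < (g ((s:ℂ) * z)).re := hpos _ (mem_ball_smul' hz hs.1.le hs.2.le)
    positivity
  · exact zero_lt_one

lemma swap_TT {a b : ℝ} (ha : -1 < a) (hb : -1 < b) {g : ℂ → ℂ}
    (hg : ContinuousOn g (Metric.ball 0 1)) {z : ℂ} (hz : z ∈ Metric.ball (0:ℂ) 1) :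
    (∫ t in (0:ℝ)..1, ((t ^ b : ℝ) : ℂ) *
        ∫ s in (0:ℝ)..1, ((s ^ a : ℝ) : ℂ) * g ((s:ℂ) * ((t:ℂ) * z)))
    = ∫ s in (0:ℝ)..1, ((s ^ a : ℝ) : ℂ) *
        ∫ t in (0:ℝ)..1, ((t ^ b : ℝ) : ℂ) * g ((t:ℂ) * ((s:ℂ) * z)) := by
  obtain ⟨M, hM0, hM⟩ := exists_bound' hg (show ‖z‖ < 1 by simpa [Metric.mem_ball] using hz)
  have hmem : ∀ {s t : ℝ}, s ∈ Ioc (0:ℝ) 1 → t ∈ Ioc (0:ℝ) 1 →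
      (s:ℂ) * ((t:ℂ) * z) ∈ Metric.closedBall (0:ℂ) ‖z‖ := by
    intro s t hs ht
    have h1 : (t:ℂ) * z ∈ Metric.closedBall (0:ℂ) ‖z‖ :=
      smul_mem_closedBall' le_rfl ht.1.le ht.2
    have : ‖(t:ℂ) * z‖ ≤ ‖z‖ := by simpa [Metric.mem_closedBall, dist_zero_right] using h1
    exact smul_mem_closedBall' this hs.1.le hs.2
  have hmemball : ∀ {s t : ℝ}, s ∈ Ioc (0:ℝ) 1 → t ∈ Ioc (0:ℝ) 1 →
      (s:ℂ) * ((t:ℂ) * z) ∈ Metric.ball (0:ℂ) 1 := by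
    intro s t hs ht
    exact mem_ball_smul' (mem_ball_smul' hz ht.1.le ht.2) hs.1.le hs.2
  -- the integrand on the product
  set f : ℝ → ℝ → ℂ := fun t s => ((t ^ b : ℝ) : ℂ) * (((s ^ a : ℝ) : ℂ) * g ((s:ℂ) * ((t:ℂ) * z)))
  have hInt : Integrable (Function.uncurry f)
      ((volume.restrict (Ioc (0:ℝ) 1)).prod (volume.restrict (Ioc (0:ℝ) 1))) := by
    rw [Measure.prod_restrict]
    apply Integrable.mono (g := fun p : ℝ × ℝ => (p.1 ^ b) * (M * p.2 ^ a))
    · have h1 : IntegrableOn (fun t : ℝ => t ^ b) (Ioc (0:ℝ) 1) := by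
        have := integrableOn_rpow_mul hb 1
        simpa using this
      have h2 : IntegrableOn (fun s : ℝ => M * s ^ a) (Ioc (0:ℝ) 1) := integrableOn_rpow_mul ha M
      have := h1.mul_prod h2
      rwa [Measure.prod_restrict] at this
    · apply ContinuousOn.aestronglyMeasurable _ (measurableSet_Ioc.prod measurableSet_Ioc)
      apply ContinuousOn.mul
      · apply Continuous.comp_continuousOn continuous_ofReal
        intro p hp
        exact ((Real.continuousAt_rpow_const p.1 b (Or.inl hp.1.1.ne')).comp
          continuous_fst.continuousAt).continuousWithinAt
      · apply ContinuousOn.mul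
        · apply Continuous.comp_continuousOn continuous_ofReal
          intro p hp
          exact ((Real.continuousAt_rpow_const p.2 a (Or.inl hp.2.1.ne')).comp
            continuous_snd.continuousAt).continuousWithinAt
        · apply ContinuousOn.comp hg
          · exact (Continuous.mul (continuous_ofReal.comp continuous_snd)
              ((continuous_ofReal.comp continuous_fst).mul continuous_const)).continuousOn
          · intro p hp
            exact hmemball hp.2 hp.1
    · rw [ae_restrict_iff' (measurableSet_Ioc.prod measurableSet_Ioc)]
      filter_upwards with p hp
      obtain ⟨ht, hs⟩ := hp
      have htb : (0:ℝ) ≤ p.1 ^ b := Real.rpow_nonneg ht.1.le b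
      have hsa : (0:ℝ) ≤ p.2 ^ a := Real.rpow_nonneg hs.1.le a
      have hgb : ‖g ((p.2:ℂ) * ((p.1:ℂ) * z))‖ ≤ M := hM _ (hmem hs ht)
      calc ‖Function.uncurry f p‖
          = p.1 ^ b * (p.2 ^ a * ‖g ((p.2:ℂ) * ((p.1:ℂ) * z))‖) := by
            simp only [Function.uncurry, f, norm_mul, Complex.norm_real, Real.norm_eq_abs,
              _root_.abs_of_nonneg htb, _root_.abs_of_nonneg hsa]
        _ ≤ p.1 ^ b * (p.2 ^ a * M) := by
            apply mul_le_mul_of_nonneg_left _ htb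
            exact mul_le_mul_of_nonneg_left hgb hsa
        _ ≤ ‖p.1 ^ b * (M * p.2 ^ a)‖ := by
            rw [Real.norm_eq_abs, _root_.abs_of_nonneg]
            · ring_nf; exact le_rfl
            · positivity
  have hswap := integral_integral_swap hInt
  -- rewrite both sides
  rw [intervalIntegral.integral_of_le zero_le_one, intervalIntegral.integral_of_le zero_le_one]
  calc ∫ t in Ioc (0:ℝ) 1, ((t ^ b : ℝ) : ℂ) *
          ∫ s in (0:ℝ)..1, ((s ^ a : ℝ) : ℂ) * g ((s:ℂ) * ((t:ℂ) * z))
      = ∫ t in Ioc (0:ℝ) 1, ∫ s in Ioc (0:ℝ) 1, f t s := by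
        apply setIntegral_congr_fun measurableSet_Ioc
        intro t _
        dsimp only
        rw [intervalIntegral.integral_of_le zero_le_one, ← integral_const_mul]
    _ = ∫ s in Ioc (0:ℝ) 1, ∫ t in Ioc (0:ℝ) 1, f t s := hswap
    _ = ∫ s in Ioc (0:ℝ) 1, ((s ^ a : ℝ) : ℂ) *
          ∫ t in (0:ℝ)..1, ((t ^ b : ℝ) : ℂ) * g ((t:ℂ) * ((s:ℂ) * z)) := by
        apply setIntegral_congr_fun measurableSet_Ioc
        intro s _
        dsimp only
        rw [intervalIntegral.integral_of_le zero_le_one, ← integral_const_mul]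
        apply setIntegral_congr_fun measurableSet_Ioc
        intro t _
        simp only [f]
        ring_nf

end Helpers

section IterLemmas
open Set

lemma sigmaIter_succ (σ : ℝ) (m : ℕ) (p : ℂ → ℂ) (z : ℂ) :
    sigmaIter σ (m + 1) p z = ((σ - (m:ℝ)) : ℂ) * TT (σ - ((m:ℝ) + 1)) (sigmaIter σ m p) z := by
  rfl

lemma contOn_sigmaIter (σ : ℝ) : ∀ m : ℕ, -1 < σ - (m:ℝ) → ∀ p : ℂ → ℂ,
    ContinuousOn p (Metric.ball 0 1) → ContinuousOn (sigmaIter σ m p) (Metric.ball 0 1)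
  | 0, _, p, hp => hp
  | (m+1), h, p, hp => by
    have hm : -1 < σ - (m:ℝ) := by push_cast at h; linarith
    have hm1 : -1 < σ - ((m:ℝ) + 1) := by push_cast at h; linarith
    have hcont := continuousOn_TT hm1 (contOn_sigmaIter σ m hm p hp)
    have : ContinuousOn (fun z => ((σ - (m:ℝ)) : ℂ) * TT (σ - ((m:ℝ) + 1)) (sigmaIter σ m p) z)
        (Metric.ball 0 1) := continuousOn_const.mul hcont
    exact this.congr (fun z _ => sigmaIter_succ σ m p z)

lemma sigmaIter_const_mul (σ : ℝ) : ∀ (m : ℕ) (C : ℂ) (p : ℂ → ℂ) (z : ℂ),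
    sigmaIter σ m (fun w => C * p w) z = C * sigmaIter σ m p z
  | 0, C, p, z => rfl
  | (m+1), C, p, z => by
    simp only [sigmaIter]
    simp_rw [sigmaIter_const_mul σ m C p]
    simp_rw [mul_left_comm _ C]
    rw [intervalIntegral.integral_const_mul]
    ring

lemma sigmaIter_comm (σ c : ℝ) (hc : -1 < c) : ∀ m : ℕ, -1 < σ - ((m:ℝ) + 1) →
    ∀ p : ℂ → ℂ, ContinuousOn p (Metric.ball 0 1) → ∀ z ∈ Metric.ball (0:ℂ) 1,
    TT c (sigmaIter σ m p) z = sigmaIter σ m (fun w => TT c p w) z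
  | 0, _, p, hp, z, hz => rfl
  | (m+1), h, p, hp, z, hz => by
    have hm : -1 < σ - ((m:ℝ) + 1) := by push_cast at h; linarith
    have hmm : -1 < σ - (m:ℝ) := by linarith
    set g := sigmaIter σ m p with hg
    have hgc : ContinuousOn g (Metric.ball 0 1) := contOn_sigmaIter σ m hmm p hp
    set b := σ - ((m:ℝ) + 1) with hb
    calc TT c (sigmaIter σ (m+1) p) z
        = ∫ s in (0:ℝ)..1, ((s ^ c : ℝ) : ℂ) *
            (((σ - (m:ℝ)) : ℂ) * ∫ t in (0:ℝ)..1, ((t ^ b : ℝ) : ℂ) * g ((t:ℂ) * ((s:ℂ) * z))) := by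
          rw [TT]
          apply intervalIntegral.integral_congr
          intro s hs
          dsimp only
          rw [sigmaIter_succ σ m p, TT]
      _ = ((σ - (m:ℝ)) : ℂ) * ∫ s in (0:ℝ)..1, ((s ^ c : ℝ) : ℂ) *
            ∫ t in (0:ℝ)..1, ((t ^ b : ℝ) : ℂ) * g ((t:ℂ) * ((s:ℂ) * z)) := by
          simp_rw [mul_left_comm _ ((σ - (m:ℝ)) : ℂ)]
          rw [intervalIntegral.integral_const_mul]
      _ = ((σ - (m:ℝ)) : ℂ) * ∫ t in (0:ℝ)..1, ((t ^ b : ℝ) : ℂ) *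
            ∫ s in (0:ℝ)..1, ((s ^ c : ℝ) : ℂ) * g ((s:ℂ) * ((t:ℂ) * z)) := by
          rw [← swap_TT hc hm hgc hz]
      _ = ((σ - (m:ℝ)) : ℂ) * ∫ t in (0:ℝ)..1, ((t ^ b : ℝ) : ℂ) *
            sigmaIter σ m (fun w => TT c p w) ((t:ℂ) * z) := by
          congr 1
          apply intervalIntegral.integral_congr
          intro t ht
          rw [uIcc_of_le zero_le_one] at ht
          dsimp only
          congr 1
          have htz : (t:ℂ) * z ∈ Metric.ball (0:ℂ) 1 := mem_ball_smul' hz ht.1 ht.2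
          rw [← sigmaIter_comm σ c hc m hm p hp _ htz, TT]
      _ = sigmaIter σ (m+1) (fun w => TT c p w) z := by
          rw [sigmaIter_succ σ m, TT]

end IterLemmas

/-- `B_n^σ(β)` is closed under the Bernardi integral
`F(z) = ((c+1)/z^c) ∫_0^z t^{c-1} f(t) dt` (averaged form
`F(z) = (c+1) ∫_0^1 s^{c-1} f(sz) ds`) when `c + 1 = σ - n > 0`. -/
theorem stmt14 (σ : ℝ) (n : ℕ) (hσ : 0 < σ - ((n : ℝ) - 1))
    (β : ℝ) (hβ0 : 0 ≤ β) (hβ1 : β < 1)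
    (c : ℝ) (hc : c + 1 = σ - n) (hc1 : 0 < c + 1)
    (f : ℂ → ℂ) (hf : MemB σ n β f)
    (F : ℂ → ℂ)
    (hF : ∀ z ∈ Metric.ball (0 : ℂ) 1,
      F z = ((c + 1 : ℝ) : ℂ) *
        ∫ s in (0 : ℝ)..1, ((s ^ (c - 1) : ℝ) : ℂ) * f ((s : ℂ) * z)) :
    MemB σ n β F := by
  obtain ⟨p, hpCara, hpeq⟩ := hf
  have hσn : (0:ℝ) < σ - (n:ℝ) := by rw [← hc]; exact hc1
  have hc0 : c + 1 ≠ 0 := ne_of_gt hc1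
  have hcgt : -1 < c := by linarith
  have hpc : ContinuousOn p (Metric.ball 0 1) := hpCara.1.continuousOn
  have hn1 : -1 < σ - ((n:ℝ) + 1) := by
    have h : σ - ((n:ℝ)+1) = c := by linarith
    rw [h]; exact hcgt
  set q : ℂ → ℂ := fun w => ((c+1 : ℝ):ℂ) * TT c p w with hq
  have hPc : ContinuousOn (sigmaIter σ n p) (Metric.ball 0 1) :=
    contOn_sigmaIter σ n (by linarith) p hpc
  have hiter : ∀ z ∈ Metric.ball (0:ℂ) 1,
      sigmaIter σ n q z = ((c+1:ℝ):ℂ) * TT c (sigmaIter σ n p) z := by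
    intro z hz
    rw [hq, sigmaIter_const_mul σ n, ← sigmaIter_comm σ c hcgt n hn1 p hpc z hz]
  refine ⟨q, ⟨?_, ?_, ?_⟩, ?_⟩
  · exact (differentiableOn_TT hcgt hpCara.1).const_mul _
  · simp only [hq]
    rw [TT_zero hcgt, hpCara.2.1, mul_one, ← Complex.ofReal_mul,
      mul_inv_cancel₀ hc0, Complex.ofReal_one]
  · intro z hz
    have h1 : 0 < (TT c p z).re := TT_re_pos hcgt hpc hpCara.2.2 hz
    simp only [hq]
    have h2 : (((c+1:ℝ):ℂ) * TT c p z).re = (c+1) * (TT c p z).re := by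
      simp [Complex.mul_re]
    rw [h2]
    positivity
  · intro z hz
    have hmem : ∀ s ∈ Set.Ioc (0:ℝ) 1, (s:ℂ) * z ∈ Metric.ball (0:ℂ) 1 :=
      fun s hs => mem_ball_smul' hz hs.1.le hs.2
    obtain ⟨M, hM0, hM⟩ := exists_bound' hPc (show ‖z‖ < 1 by simpa [Metric.mem_ball] using hz)
    have hintP : IntegrableOn (fun s : ℝ => ((s ^ c : ℝ):ℂ) * sigmaIter σ n p ((s:ℂ)*z))
        (Set.Ioc 0 1) := integrableOn_integrand hcgt hPc hz hM
    have hintc : IntegrableOn (fun s : ℝ => ((s ^ c : ℝ):ℂ)) (Set.Ioc 0 1) := by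
      have h := intervalIntegral.intervalIntegrable_rpow' (a:=0) (b:=1) hcgt
      rw [intervalIntegrable_iff_integrableOn_Ioc_of_le zero_le_one] at h
      exact h.ofReal
    have hF1 : (∫ s in (0:ℝ)..1, ((s ^ (c-1) : ℝ):ℂ) * f ((s:ℂ)*z))
        = ∫ s in Set.Ioc (0:ℝ) 1,
            ((z * (β:ℂ)) * ((s ^ c : ℝ):ℂ)
              + (z * ((1:ℂ) - (β:ℂ))) * (((s ^ c : ℝ):ℂ) * sigmaIter σ n p ((s:ℂ)*z))) := by
      rw [intervalIntegral.integral_of_le zero_le_one]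
      apply setIntegral_congr_fun measurableSet_Ioc
      intro s hs
      dsimp only
      rw [hpeq _ (hmem s hs)]
      have hsc : ((s ^ (c-1) : ℝ):ℂ) * (s:ℂ) = ((s ^ c : ℝ):ℂ) := by
        rw [← Complex.ofReal_mul]
        congr 1
        rw [← Real.rpow_add_one hs.1.ne' (c-1)]
        ring_nf
      calc ((s ^ (c-1) : ℝ):ℂ) * (((s:ℂ)*z) * ((β:ℂ) + ((1:ℂ) - (β:ℂ)) * sigmaIter σ n p ((s:ℂ)*z)))
          = (((s ^ (c-1) : ℝ):ℂ) * (s:ℂ))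
              * (z * ((β:ℂ) + ((1:ℂ) - (β:ℂ)) * sigmaIter σ n p ((s:ℂ)*z))) := by ring
        _ = ((s ^ c : ℝ):ℂ) * (z * ((β:ℂ) + ((1:ℂ) - (β:ℂ)) * sigmaIter σ n p ((s:ℂ)*z))) := by
            rw [hsc]
        _ = (z * (β:ℂ)) * ((s ^ c : ℝ):ℂ)
              + (z * ((1:ℂ) - (β:ℂ))) * (((s ^ c : ℝ):ℂ) * sigmaIter σ n p ((s:ℂ)*z)) := by ring
    have hval : (∫ s in Set.Ioc (0:ℝ) 1, ((s ^ c : ℝ):ℂ)) = (((c+1)⁻¹ : ℝ):ℂ) := by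
      rw [← intervalIntegral.integral_of_le zero_le_one, intervalIntegral.integral_ofReal,
        integral_rpow (Or.inl hcgt), Real.one_rpow, Real.zero_rpow hc0]
      norm_num
    have hsplit : (∫ s in Set.Ioc (0:ℝ) 1,
            ((z * (β:ℂ)) * ((s ^ c : ℝ):ℂ)
              + (z * ((1:ℂ) - (β:ℂ))) * (((s ^ c : ℝ):ℂ) * sigmaIter σ n p ((s:ℂ)*z))))
        = (z * (β:ℂ)) * (((c+1)⁻¹ : ℝ):ℂ)
            + (z * ((1:ℂ) - (β:ℂ))) * TT c (sigmaIter σ n p) z := by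
      rw [integral_add (hintc.const_mul _) (hintP.const_mul _), integral_const_mul,
        integral_const_mul, hval, TT_eq_setIntegral]
    rw [hF z hz, hF1, hsplit, hiter z hz]
    have hinv : ((c+1:ℝ):ℂ) * (((c+1)⁻¹:ℝ):ℂ) = 1 := by
      rw [← Complex.ofReal_mul, mul_inv_cancel₀ hc0, Complex.ofReal_one]
    push_cast
    push_cast at hinv
    linear_combination (z * (β:ℂ)) * hinv
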